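/- Let f : ℝ → ℝ → ℝ be positive on [1,∞)×[1,∞), twice differentiable there, monotone non-decreasing (f(a,b) ≤ f(c,d) whenever 1 ≤ a ≤ c and 1 ≤ b ≤ d), and satisfy: (1) ∂f/∂x and ∂f/∂y at (t,t) converge as t → ∞ to constants C_x and C_y with C_x + C_y > 0, and f(t,t) = (C_x+C_y)·t for all t ≥ 1; (2) there exist A, B ≥ 0 with A + B < C_x + C_y and N such that for all n ≥ N and all a₁,a₂,a₃,a₄ ∈ [(2+C_x+C_y)ⁿ, 2(2+C_x+C_y)ⁿ], (f(a₁,a₂) − f(a₃,a₄))² ≤ A(a₁−a₃)² + B(a₂−a₄)²; (3) for each second-order partial derivative g of f, (2+C_x+C_y)^{2n} · sup{ g(s,t)² : (s,t) ∈ [(2+C_x+C_y)ⁿ, 2(2+C_x+C_y)ⁿ]² } / 2ⁿ → 0. If in addition f is concave or convex on [1,∞)×[1,∞), then the sequence E_n / (2+C_x+C_y)ⁿ converges. -/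

import Mathlib

open MeasureTheory Filter

/-- The recursively defined sequence of measures: `μ₀ = (δ₁ + δ₂)/2` and `μ_{n+1}` is the
pushforward of `μ_n ⊗ μ_n ⊗ μ_n ⊗ μ_n` under `(a,b,c,d) ↦ a + b + f c d`. -/
noncomputable def mu (f : ℝ → ℝ → ℝ) : ℕ → Measure ℝ
  | 0 => (2 : ENNReal)⁻¹ • Measure.dirac 1 + (2 : ENNReal)⁻¹ • Measure.dirac 2
  | n + 1 =>
      Measure.map (fun p : ℝ × ℝ × ℝ × ℝ => p.1 + p.2.1 + f p.2.2.1 p.2.2.2)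
        ((mu f n).prod ((mu f n).prod ((mu f n).prod (mu f n))))

/-- The mean of `μ_n`. -/
noncomputable def En (f : ℝ → ℝ → ℝ) (n : ℕ) : ℝ := ∫ x, x ∂(mu f n)

/-- The variance of `μ_n`. -/
noncomputable def Vn (f : ℝ → ℝ → ℝ) (n : ℕ) : ℝ := ∫ x, (x - En f n) ^ 2 ∂(mu f n)

/-- First-order partial derivative of `f` in the first variable. -/
noncomputable def pdx (f : ℝ → ℝ → ℝ) (s t : ℝ) : ℝ := deriv (fun u => f u t) s

/-- First-order partial derivative of `f` in the second variable. -/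
noncomputable def pdy (f : ℝ → ℝ → ℝ) (s t : ℝ) : ℝ := deriv (fun v => f s v) t

/-- Second-order partial derivative `∂²f/∂x²`. -/
noncomputable def pdxx (f : ℝ → ℝ → ℝ) (s t : ℝ) : ℝ := deriv (fun u => pdx f u t) s

/-- Second-order partial derivative `∂²f/∂y²`. -/
noncomputable def pdyy (f : ℝ → ℝ → ℝ) (s t : ℝ) : ℝ := deriv (fun v => pdy f s v) t

/-- Second-order mixed partial derivative `∂²f/∂x∂y`. -/
noncomputable def pdxy (f : ℝ → ℝ → ℝ) (s t : ℝ) : ℝ := deriv (fun v => pdx f s v) t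


lemma aux_ae2 {α β : Type*} [MeasurableSpace α] [MeasurableSpace β]
    {μ : Measure α} {ν : Measure β} [SigmaFinite μ] [SigmaFinite ν]
    {s : Set α} {t : Set β} (hs : ∀ᵐ x ∂μ, x ∈ s) (ht : ∀ᵐ x ∂ν, x ∈ t) :
    ∀ᵐ q ∂(μ.prod ν), q.1 ∈ s ∧ q.2 ∈ t := by
  have h1 : ∀ᵐ q ∂(μ.prod ν), q.1 ∈ s := Measure.quasiMeasurePreserving_fst.ae hs
  have h2 : ∀ᵐ q ∂(μ.prod ν), q.2 ∈ t := Measure.quasiMeasurePreserving_snd.ae ht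
  filter_upwards [h1, h2] with q hq1 hq2 using ⟨hq1, hq2⟩

lemma aux_ae4 {μ : Measure ℝ} [IsProbabilityMeasure μ] {s : Set ℝ} (hs : ∀ᵐ x ∂μ, x ∈ s) :
    ∀ᵐ p ∂(μ.prod (μ.prod (μ.prod μ))), p.1 ∈ s ∧ p.2.1 ∈ s ∧ p.2.2.1 ∈ s ∧ p.2.2.2 ∈ s := by
  have h2 : ∀ᵐ q ∂(μ.prod μ), q.1 ∈ s ∧ q.2 ∈ s := aux_ae2 hs hs
  have h3 := aux_ae2 (μ := μ) (ν := μ.prod μ) hs h2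
  have h4 := aux_ae2 (μ := μ) (ν := μ.prod (μ.prod μ)) hs h3
  filter_upwards [h4] with p hp using ⟨hp.1, hp.2.1, hp.2.2.1, hp.2.2.2⟩

lemma aux_map1 {μ : Measure ℝ} [IsProbabilityMeasure μ] :
    Measure.map (fun p : ℝ × ℝ × ℝ × ℝ => p.1) (μ.prod (μ.prod (μ.prod μ))) = μ := by
  rw [show (fun p : ℝ × ℝ × ℝ × ℝ => p.1) = Prod.fst from rfl, Measure.map_fst_prod,
    measure_univ, one_smul]

lemma aux_map21 {μ : Measure ℝ} [IsProbabilityMeasure μ] :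
    Measure.map (fun p : ℝ × ℝ × ℝ × ℝ => p.2.1) (μ.prod (μ.prod (μ.prod μ))) = μ := by
  have h : (fun p : ℝ × ℝ × ℝ × ℝ => p.2.1) = (Prod.fst ∘ Prod.snd) := rfl
  rw [h, ← Measure.map_map measurable_fst measurable_snd,
    Measure.map_snd_prod, measure_univ, one_smul, Measure.map_fst_prod, measure_univ, one_smul]

lemma aux_map22 {μ : Measure ℝ} [IsProbabilityMeasure μ] :
    Measure.map (fun p : ℝ × ℝ × ℝ × ℝ => p.2.2) (μ.prod (μ.prod (μ.prod μ))) = μ.prod μ := by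
  have h : (fun p : ℝ × ℝ × ℝ × ℝ => p.2.2) = (Prod.snd ∘ Prod.snd) := rfl
  rw [h, ← Measure.map_map measurable_snd measurable_snd,
    Measure.map_snd_prod, measure_univ, one_smul, Measure.map_snd_prod, measure_univ, one_smul]

lemma aux_mapfst2 {μ : Measure ℝ} [IsProbabilityMeasure μ] :
    Measure.map (fun q : ℝ × ℝ => q.1) (μ.prod μ) = μ := by
  rw [show (fun q : ℝ × ℝ => q.1) = Prod.fst from rfl, Measure.map_fst_prod, measure_univ,
    one_smul]

lemma aux_mapsnd2 {μ : Measure ℝ} [IsProbabilityMeasure μ] :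
    Measure.map (fun q : ℝ × ℝ => q.2) (μ.prod μ) = μ := by
  rw [show (fun q : ℝ × ℝ => q.2) = Prod.snd from rfl, Measure.map_snd_prod, measure_univ,
    one_smul]

lemma aux_int_comp {α β : Type*} [MeasurableSpace α] [MeasurableSpace β]
    {μ : Measure α} {g : α → β} (hg : Measurable g) (h : β → ℝ)
    (hh : AEStronglyMeasurable h (Measure.map g μ)) :
    ∫ x, h (g x) ∂μ = ∫ y, h y ∂(Measure.map g μ) :=
  (integral_map hg.aemeasurable hh).symm

lemma aux_mean {μ : Measure ℝ} [IsProbabilityMeasure μ] {a b : ℝ}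
    (h : ∀ᵐ x ∂μ, x ∈ Set.Icc a b) (ha : 0 ≤ a) :
    Integrable (fun x : ℝ => x) μ ∧ a ≤ ∫ x, x ∂μ ∧ ∫ x, x ∂μ ≤ b := by
  have hint : Integrable (fun x : ℝ => x) μ := by
    refine Integrable.mono' (integrable_const b) measurable_id.aestronglyMeasurable ?_
    filter_upwards [h] with x hx
    rw [Real.norm_eq_abs, abs_of_nonneg (le_trans ha hx.1)]
    exact hx.2
  refine ⟨hint, ?_, ?_⟩
  · have := integral_mono_ae (integrable_const a) hint (by filter_upwards [h] with x hx using hx.1)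
    simpa using this
  · have := integral_mono_ae hint (integrable_const b) (by filter_upwards [h] with x hx using hx.2)
    simpa using this

lemma aux_Fmeas {f : ℝ → ℝ → ℝ} {μ : Measure ℝ} [IsProbabilityMeasure μ] {a b : ℝ}
    (hcont : ContinuousOn (fun p : ℝ × ℝ => f p.1 p.2) (Set.Ici 1 ×ˢ Set.Ici 1))
    (h1a : (1:ℝ) ≤ a) (hb : ∀ᵐ x ∂μ, x ∈ Set.Icc a b) :
    AEMeasurable (fun q : ℝ × ℝ => f q.1 q.2) (μ.prod μ) := by
  have hsub : Set.Icc a b ×ˢ Set.Icc a b ⊆ Set.Ici (1:ℝ) ×ˢ Set.Ici 1 := by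
    intro q hq
    exact ⟨le_trans h1a hq.1.1, le_trans h1a hq.2.1⟩
  have hae2 : ∀ᵐ q ∂(μ.prod μ), q ∈ Set.Icc a b ×ˢ Set.Icc a b := by
    filter_upwards [aux_ae2 hb hb] with q hq using ⟨hq.1, hq.2⟩
  have h := ContinuousOn.aemeasurable (μ := μ.prod μ) (hcont.mono hsub)
    (measurableSet_Icc.prod measurableSet_Icc)
  rwa [Measure.restrict_eq_self_of_ae_mem hae2] at h

lemma aux_F4meas {f : ℝ → ℝ → ℝ} {μ : Measure ℝ} [IsProbabilityMeasure μ] {a b : ℝ}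
    (hcont : ContinuousOn (fun p : ℝ × ℝ => f p.1 p.2) (Set.Ici 1 ×ˢ Set.Ici 1))
    (h1a : (1:ℝ) ≤ a) (hb : ∀ᵐ x ∂μ, x ∈ Set.Icc a b) :
    AEMeasurable (fun p : ℝ × ℝ × ℝ × ℝ => f p.2.2.1 p.2.2.2) (μ.prod (μ.prod (μ.prod μ))) := by
  have h : (fun p : ℝ × ℝ × ℝ × ℝ => f p.2.2.1 p.2.2.2)
      = (fun q : ℝ × ℝ => f q.1 q.2) ∘ (fun p : ℝ × ℝ × ℝ × ℝ => p.2.2) := rfl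
  rw [h]
  have hm := aux_Fmeas hcont h1a hb
  rw [← aux_map22 (μ := μ)] at hm
  exact AEMeasurable.comp_aemeasurable hm (measurable_snd.comp measurable_snd).aemeasurable

lemma aux_phimeas {f : ℝ → ℝ → ℝ} {μ : Measure ℝ} [IsProbabilityMeasure μ] {a b : ℝ}
    (hcont : ContinuousOn (fun p : ℝ × ℝ => f p.1 p.2) (Set.Ici 1 ×ˢ Set.Ici 1))
    (h1a : (1:ℝ) ≤ a) (hb : ∀ᵐ x ∂μ, x ∈ Set.Icc a b) :
    AEMeasurable (fun p : ℝ × ℝ × ℝ × ℝ => p.1 + p.2.1 + f p.2.2.1 p.2.2.2)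
      (μ.prod (μ.prod (μ.prod μ))) :=
  (measurable_fst.aemeasurable.add
    (measurable_fst.comp measurable_snd).aemeasurable).add (aux_F4meas hcont h1a hb)

lemma master (f : ℝ → ℝ → ℝ) (C : ℝ) (hC : 0 < C)
    (hmono : ∀ a b c d : ℝ, 1 ≤ a → a ≤ c → 1 ≤ b → b ≤ d → f a b ≤ f c d)
    (hlin : ∀ t : ℝ, 1 ≤ t → f t t = C * t)
    (hcont : ContinuousOn (fun p : ℝ × ℝ => f p.1 p.2) (Set.Ici 1 ×ˢ Set.Ici 1)) :
    ∀ n : ℕ, IsProbabilityMeasure (mu f n) ∧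
      ∀ᵐ x ∂(mu f n), x ∈ Set.Icc ((2+C)^n) (2*(2+C)^n) := by
  have hL : (1:ℝ) ≤ 2 + C := by linarith
  intro n
  induction n with
  | zero =>
    have h0 : mu f 0
        = (2 : ENNReal)⁻¹ • Measure.dirac (1:ℝ) + (2 : ENNReal)⁻¹ • Measure.dirac 2 := rfl
    constructor
    · refine ⟨?_⟩
      rw [h0]
      simp [ENNReal.inv_two_add_inv_two]
    · rw [h0, ae_add_measure_iff, Measure.ae_ennreal_smul_measure_iff (c := (2 : ENNReal)⁻¹) (by simp),
        Measure.ae_ennreal_smul_measure_iff (c := (2 : ENNReal)⁻¹) (by simp)]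
      refine ⟨(ae_dirac_iff measurableSet_Icc).2 ?_, (ae_dirac_iff measurableSet_Icc).2 ?_⟩ <;>
        norm_num
  | succ n ih =>
    obtain ⟨ihp, ihae⟩ := ih
    haveI := ihp
    have h1n : (1:ℝ) ≤ (2+C)^n := one_le_pow₀ hL
    have hφ := aux_phimeas (μ := mu f n) hcont h1n ihae
    have hmu : mu f (n+1) = Measure.map (fun p : ℝ × ℝ × ℝ × ℝ => p.1 + p.2.1 + f p.2.2.1 p.2.2.2)
        ((mu f n).prod ((mu f n).prod ((mu f n).prod (mu f n)))) := rfl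
    constructor
    · rw [hmu]; exact Measure.isProbabilityMeasure_map hφ
    · rw [hmu]
      refine (ae_map_iff hφ measurableSet_Icc).2 ?_
      filter_upwards [aux_ae4 ihae] with p hp
      obtain ⟨h1, h21, h221, h222⟩ := hp
      have hflo : C * (2+C)^n ≤ f p.2.2.1 p.2.2.2 := by
        rw [← hlin ((2+C)^n) h1n]
        exact hmono _ _ _ _ h1n h221.1 h1n h222.1
      have hfhi : f p.2.2.1 p.2.2.2 ≤ C * (2 * (2+C)^n) := by
        rw [← hlin (2*(2+C)^n) (by linarith)]
        exact hmono _ _ _ _ (le_trans h1n h221.1) h221.2 (le_trans h1n h222.1) h222.2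
      rw [pow_succ]
      constructor
      · nlinarith [h1.1, h21.1]
      · nlinarith [h1.2, h21.2]

lemma aux_recur {f : ℝ → ℝ → ℝ} {μ : Measure ℝ} [IsProbabilityMeasure μ] {a b M : ℝ}
    (hcont : ContinuousOn (fun p : ℝ × ℝ => f p.1 p.2) (Set.Ici 1 ×ˢ Set.Ici 1))
    (h1a : (1:ℝ) ≤ a) (hb : ∀ᵐ x ∂μ, x ∈ Set.Icc a b)
    (hM : ∀ x y : ℝ, x ∈ Set.Icc a b → y ∈ Set.Icc a b → |f x y| ≤ M) :
    ∫ x, x ∂(Measure.map (fun p : ℝ × ℝ × ℝ × ℝ => p.1 + p.2.1 + f p.2.2.1 p.2.2.2)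
        (μ.prod (μ.prod (μ.prod μ))))
      = (∫ x, x ∂μ) + (∫ x, x ∂μ) + ∫ q : ℝ × ℝ, f q.1 q.2 ∂(μ.prod μ) := by
  have hφ := aux_phimeas hcont h1a hb
  have hb' : ∀ x ∈ Set.Icc a b, ‖x‖ ≤ b := by
    intro x hx
    rw [Real.norm_eq_abs, abs_of_nonneg (by linarith [hx.1])]
    exact hx.2
  have i1 : Integrable (fun p : ℝ × ℝ × ℝ × ℝ => p.1) (μ.prod (μ.prod (μ.prod μ))) := by
    refine Integrable.mono' (integrable_const b) measurable_fst.aestronglyMeasurable ?_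
    filter_upwards [aux_ae4 hb] with p hp using hb' _ hp.1
  have i2 : Integrable (fun p : ℝ × ℝ × ℝ × ℝ => p.2.1) (μ.prod (μ.prod (μ.prod μ))) := by
    refine Integrable.mono' (integrable_const b)
      (measurable_fst.comp measurable_snd).aestronglyMeasurable ?_
    filter_upwards [aux_ae4 hb] with p hp using hb' _ hp.2.1
  have i3 : Integrable (fun p : ℝ × ℝ × ℝ × ℝ => f p.2.2.1 p.2.2.2)
      (μ.prod (μ.prod (μ.prod μ))) := by
    refine Integrable.mono' (integrable_const M)
      (aux_F4meas hcont h1a hb).aestronglyMeasurable ?_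
    filter_upwards [aux_ae4 hb] with p hp using hM _ _ hp.2.2.1 hp.2.2.2
  rw [integral_map (f := fun x : ℝ => x) hφ aestronglyMeasurable_id]
  have i12 : Integrable (fun p : ℝ × ℝ × ℝ × ℝ => p.1 + p.2.1) (μ.prod (μ.prod (μ.prod μ))) :=
    i1.add i2
  rw [integral_add i12 i3, integral_add i1 i2]
  have e1 : ∫ p : ℝ × ℝ × ℝ × ℝ, p.1 ∂(μ.prod (μ.prod (μ.prod μ))) = ∫ x, x ∂μ := by
    rw [aux_int_comp measurable_fst (fun x : ℝ => x)
      (by rw [aux_map1]; exact aestronglyMeasurable_id), aux_map1]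
  have e2 : ∫ p : ℝ × ℝ × ℝ × ℝ, p.2.1 ∂(μ.prod (μ.prod (μ.prod μ))) = ∫ x, x ∂μ := by
    rw [aux_int_comp (show Measurable (fun p : ℝ × ℝ × ℝ × ℝ => p.2.1) from
        measurable_fst.comp measurable_snd) (fun x : ℝ => x)
      (by rw [aux_map21]; exact aestronglyMeasurable_id), aux_map21]
  have e3 : ∫ p : ℝ × ℝ × ℝ × ℝ, f p.2.2.1 p.2.2.2 ∂(μ.prod (μ.prod (μ.prod μ)))
      = ∫ q : ℝ × ℝ, f q.1 q.2 ∂(μ.prod μ) := by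
    rw [aux_int_comp (show Measurable (fun p : ℝ × ℝ × ℝ × ℝ => p.2.2) from
        measurable_snd.comp measurable_snd) (fun q : ℝ × ℝ => f q.1 q.2)
      (by rw [aux_map22]; exact (aux_Fmeas hcont h1a hb).aestronglyMeasurable), aux_map22]
  rw [e1, e2, e3]

lemma aux_jensen_data {f : ℝ → ℝ → ℝ} {μ : Measure ℝ} [IsProbabilityMeasure μ] {a b M : ℝ}
    (hcont : ContinuousOn (fun p : ℝ × ℝ => f p.1 p.2) (Set.Ici 1 ×ˢ Set.Ici 1))
    (h1a : (1:ℝ) ≤ a) (hb : ∀ᵐ x ∂μ, x ∈ Set.Icc a b)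
    (hM : ∀ x y : ℝ, x ∈ Set.Icc a b → y ∈ Set.Icc a b → |f x y| ≤ M) :
    (∀ᵐ q ∂(μ.prod μ), q ∈ Set.Ici (1:ℝ) ×ˢ Set.Ici 1) ∧
    Integrable (fun q : ℝ × ℝ => q) (μ.prod μ) ∧
    Integrable (fun q : ℝ × ℝ => f q.1 q.2) (μ.prod μ) ∧
    (∫ q : ℝ × ℝ, q ∂(μ.prod μ)) = (∫ x, x ∂μ, ∫ x, x ∂μ) := by
  have hb' : ∀ x ∈ Set.Icc a b, ‖x‖ ≤ b := by
    intro x hx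
    rw [Real.norm_eq_abs, abs_of_nonneg (by linarith [hx.1])]
    exact hx.2
  have hqs : ∀ᵐ q ∂(μ.prod μ), q ∈ Set.Ici (1:ℝ) ×ˢ Set.Ici 1 := by
    filter_upwards [aux_ae2 hb hb] with q hq using
      ⟨le_trans h1a hq.1.1, le_trans h1a hq.2.1⟩
  have hid : Integrable (fun q : ℝ × ℝ => q) (μ.prod μ) := by
    refine Integrable.mono' (integrable_const b) measurable_id.aestronglyMeasurable ?_
    filter_upwards [aux_ae2 hb hb] with q hq
    rw [Prod.norm_def]
    exact max_le (hb' _ hq.1) (hb' _ hq.2)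
  have hFi : Integrable (fun q : ℝ × ℝ => f q.1 q.2) (μ.prod μ) := by
    refine Integrable.mono' (integrable_const M)
      (aux_Fmeas hcont h1a hb).aestronglyMeasurable ?_
    filter_upwards [aux_ae2 hb hb] with q hq using hM _ _ hq.1 hq.2
  refine ⟨hqs, hid, hFi, ?_⟩
  have c1 : (∫ q : ℝ × ℝ, q ∂(μ.prod μ)).1 = ∫ x, x ∂μ := by
    rw [show (∫ q : ℝ × ℝ, q ∂(μ.prod μ)).1
        = (ContinuousLinearMap.fst ℝ ℝ ℝ) (∫ q : ℝ × ℝ, q ∂(μ.prod μ)) from rfl,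
      ← ContinuousLinearMap.integral_comp_comm _ hid]
    rw [show (fun q : ℝ × ℝ => (ContinuousLinearMap.fst ℝ ℝ ℝ) q)
        = (fun q : ℝ × ℝ => q.1) from rfl]
    rw [aux_int_comp measurable_fst (fun x : ℝ => x)
      (by rw [aux_mapfst2]; exact aestronglyMeasurable_id), aux_mapfst2]
  have c2 : (∫ q : ℝ × ℝ, q ∂(μ.prod μ)).2 = ∫ x, x ∂μ := by
    rw [show (∫ q : ℝ × ℝ, q ∂(μ.prod μ)).2
        = (ContinuousLinearMap.snd ℝ ℝ ℝ) (∫ q : ℝ × ℝ, q ∂(μ.prod μ)) from rfl,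
      ← ContinuousLinearMap.integral_comp_comm _ hid]
    rw [show (fun q : ℝ × ℝ => (ContinuousLinearMap.snd ℝ ℝ ℝ) q)
        = (fun q : ℝ × ℝ => q.2) from rfl]
    rw [aux_int_comp measurable_snd (fun x : ℝ => x)
      (by rw [aux_mapsnd2]; exact aestronglyMeasurable_id), aux_mapsnd2]
  exact Prod.ext c1 c2

theorem stmt2 (f : ℝ → ℝ → ℝ) (Cx Cy A B : ℝ) (N : ℕ)
    (hpos : ∀ x y : ℝ, 1 ≤ x → 1 ≤ y → 0 < f x y)
    -- twice differentiable on the quadrant: `f` and its first-order partial derivatives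
    -- are differentiable there
    (hdiff : ∀ x y : ℝ, 1 ≤ x → 1 ≤ y →
      DifferentiableAt ℝ (fun p : ℝ × ℝ => f p.1 p.2) (x, y) ∧
      DifferentiableAt ℝ (fun p : ℝ × ℝ => pdx f p.1 p.2) (x, y) ∧
      DifferentiableAt ℝ (fun p : ℝ × ℝ => pdy f p.1 p.2) (x, y))
    -- monotone non-decreasing
    (hmono : ∀ a b c d : ℝ, 1 ≤ a → a ≤ c → 1 ≤ b → b ≤ d → f a b ≤ f c d)
    -- condition 1
    (h1x : Tendsto (fun t : ℝ => pdx f t t) atTop (nhds Cx))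
    (h1y : Tendsto (fun t : ℝ => pdy f t t) atTop (nhds Cy))
    (hC : 0 < Cx + Cy)
    (hlin : ∀ t : ℝ, 1 ≤ t → f t t = (Cx + Cy) * t)
    -- condition 2
    (hA : 0 ≤ A) (hB : 0 ≤ B) (hAB : A + B < Cx + Cy)
    (h2 : ∀ n : ℕ, N ≤ n → ∀ a1 a2 a3 a4 : ℝ,
      a1 ∈ Set.Icc ((2 + Cx + Cy) ^ n) (2 * (2 + Cx + Cy) ^ n) →
      a2 ∈ Set.Icc ((2 + Cx + Cy) ^ n) (2 * (2 + Cx + Cy) ^ n) →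
      a3 ∈ Set.Icc ((2 + Cx + Cy) ^ n) (2 * (2 + Cx + Cy) ^ n) →
      a4 ∈ Set.Icc ((2 + Cx + Cy) ^ n) (2 * (2 + Cx + Cy) ^ n) →
      (f a1 a2 - f a3 a4) ^ 2 ≤ A * (a1 - a3) ^ 2 + B * (a2 - a4) ^ 2)
    -- condition 3
    (h3 : ∀ g ∈ ({pdxx f, pdyy f, pdxy f} : Set (ℝ → ℝ → ℝ)),
      Tendsto (fun n : ℕ => (2 + Cx + Cy) ^ (2 * n) *
        sSup ((fun p : ℝ × ℝ => (g p.1 p.2) ^ 2) ''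
          (Set.Icc ((2 + Cx + Cy) ^ n) (2 * (2 + Cx + Cy) ^ n) ×ˢ
           Set.Icc ((2 + Cx + Cy) ^ n) (2 * (2 + Cx + Cy) ^ n))) / 2 ^ n)
        atTop (nhds 0)) :
    -- in addition, `f` is concave or convex on the quadrant
    ∀ _ : ConvexOn ℝ (Set.Ici (1 : ℝ) ×ˢ Set.Ici (1 : ℝ)) (fun p : ℝ × ℝ => f p.1 p.2) ∨
          ConcaveOn ℝ (Set.Ici (1 : ℝ) ×ˢ Set.Ici (1 : ℝ)) (fun p : ℝ × ℝ => f p.1 p.2),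
    -- conclusion: `E_n / (2 + C_x + C_y)ⁿ` converges
    ∃ L : ℝ, Tendsto (fun n : ℕ => En f n / (2 + Cx + Cy) ^ n) atTop (nhds L) := by
  intro hcc
  have hcont : ContinuousOn (fun p : ℝ × ℝ => f p.1 p.2) (Set.Ici 1 ×ˢ Set.Ici 1) := by
    intro p hp
    exact ((hdiff p.1 p.2 hp.1 hp.2).1.continuousAt).continuousWithinAt
  have hmaster := master f (Cx + Cy) hC hmono hlin hcont
  set L : ℝ := 2 + Cx + Cy with hLdef
  have hLeq : 2 + (Cx + Cy) = L := by rw [hLdef]; ring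
  have hLpos : 0 < L := by rw [hLdef]; linarith
  have hL1 : (1:ℝ) ≤ L := by rw [hLdef]; linarith
  have step : ∀ n : ℕ,
      (L ^ n ≤ En f n ∧ En f n ≤ 2 * L ^ n) ∧
      (ConvexOn ℝ (Set.Ici (1 : ℝ) ×ˢ Set.Ici (1 : ℝ)) (fun p : ℝ × ℝ => f p.1 p.2) →
        L * En f n ≤ En f (n+1)) ∧
      (ConcaveOn ℝ (Set.Ici (1 : ℝ) ×ˢ Set.Ici (1 : ℝ)) (fun p : ℝ × ℝ => f p.1 p.2) →
        En f (n+1) ≤ L * En f n) := by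
    intro n
    obtain ⟨hp, hae⟩ := hmaster n
    haveI := hp
    rw [hLeq] at hae
    have h1n : (1:ℝ) ≤ L ^ n := one_le_pow₀ hL1
    have hLn0 : (0:ℝ) < L ^ n := pow_pos hLpos n
    have hMbd : ∀ x y : ℝ, x ∈ Set.Icc (L ^ n) (2 * L ^ n) →
        y ∈ Set.Icc (L ^ n) (2 * L ^ n) → |f x y| ≤ (Cx + Cy) * (2 * L ^ n) := by
      intro x y hx hy
      have lo : (Cx + Cy) * L ^ n ≤ f x y := by
        rw [← hlin (L ^ n) h1n]
        exact hmono _ _ _ _ h1n hx.1 h1n hy.1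
      have hi : f x y ≤ (Cx + Cy) * (2 * L ^ n) := by
        rw [← hlin (2 * L ^ n) (by linarith)]
        exact hmono _ _ _ _ (le_trans h1n hx.1) hx.2 (le_trans h1n hy.1) hy.2
      have h0 : (0:ℝ) ≤ (Cx + Cy) * L ^ n := by positivity
      rw [abs_of_nonneg (le_trans h0 lo)]
      exact hi
    obtain ⟨hqs, hid, hFi, hmean⟩ := aux_jensen_data hcont h1n hae hMbd
    have hmb := aux_mean hae (by positivity)
    have hEn1 : (1:ℝ) ≤ En f n := le_trans h1n hmb.2.1
    have hrec : En f (n+1) = En f n + En f n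
        + ∫ q : ℝ × ℝ, f q.1 q.2 ∂((mu f n).prod (mu f n)) :=
      aux_recur hcont h1n hae hMbd
    have hfE : f (En f n) (En f n) = (Cx + Cy) * En f n := hlin _ hEn1
    refine ⟨⟨hmb.2.1, hmb.2.2⟩, ?_, ?_⟩
    · intro hcv
      have hJ := hcv.map_integral_le (μ := (mu f n).prod (mu f n)) hcont
        (isClosed_Ici.prod isClosed_Ici) hqs hid hFi
      rw [hmean] at hJ
      have hJ' : f (En f n) (En f n)
          ≤ ∫ q : ℝ × ℝ, f q.1 q.2 ∂((mu f n).prod (mu f n)) := hJ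
      rw [hrec, hLdef]
      nlinarith [hJ']
    · intro hcv
      have hJ := hcv.le_map_integral (μ := (mu f n).prod (mu f n)) hcont
        (isClosed_Ici.prod isClosed_Ici) hqs hid hFi
      rw [hmean] at hJ
      have hJ' : (∫ q : ℝ × ℝ, f q.1 q.2 ∂((mu f n).prod (mu f n)))
          ≤ f (En f n) (En f n) := hJ
      rw [hrec, hLdef]
      nlinarith [hJ']
  obtain hcv | hcc' := hcc
  · have mono : Monotone (fun n : ℕ => En f n / L ^ n) := by
      refine monotone_nat_of_le_succ (fun n => ?_)
      have h := (step n).2.1 hcv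
      rw [div_le_div_iff₀ (pow_pos hLpos n) (pow_pos hLpos (n+1)), pow_succ]
      nlinarith [pow_pos hLpos n]
    refine ⟨_, tendsto_atTop_ciSup mono ⟨2, ?_⟩⟩
    rintro x ⟨n, rfl⟩
    rw [div_le_iff₀ (pow_pos hLpos n)]
    beta_reduce
    linarith [(step n).1.2]
  · have anti : Antitone (fun n : ℕ => En f n / L ^ n) := by
      refine antitone_nat_of_succ_le (fun n => ?_)
      have h := (step n).2.2 hcc'
      rw [div_le_div_iff₀ (pow_pos hLpos (n+1)) (pow_pos hLpos n), pow_succ]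
      nlinarith [pow_pos hLpos n]
    refine ⟨_, tendsto_atTop_ciInf anti ⟨1, ?_⟩⟩
    rintro x ⟨n, rfl⟩
    rw [le_div_iff₀ (pow_pos hLpos n)]
    beta_reduce
    linarith [(step n).1.1]
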